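/- Let n ≥ 2. If there exists a set B ⊆ (ZMod n)^n of exactly n² vectors with the plane code property, then there exists a complete set of n - 1 mutually orthogonal Latin squares of order n. -/

import Mathlib

/-- The number of coordinates where two vectors in `(ZMod n)^n` agree,
i.e. the number of coordinates of `b - b'` equal to `0`. -/
def agreeCount {n : ℕ} (b b' : Fin n → ZMod n) : ℕ :=
  (Finset.univ.filter fun i => b i - b' i = 0).card

/-- `B` has the plane code property: any two distinct elements of `B`
agree in at most one coordinate. -/
def PlaneCode {n : ℕ} (B : Finset (Fin n → ZMod n)) : Prop :=
  ∀ b ∈ B, ∀ b' ∈ B, b ≠ b' → agreeCount b b' ≤ 1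


/-- `S` is a Latin square of order `n`: every row and every column is a
bijection of `Fin n`. -/
def IsLatinSquare {n : ℕ} (S : Fin n → Fin n → Fin n) : Prop :=
  (∀ i, Function.Bijective (fun j => S i j)) ∧
  (∀ j, Function.Bijective (fun i => S i j))

/-- Two Latin squares are orthogonal if all ordered pairs of corresponding
entries are distinct. -/
def IsOrthogonal {n : ℕ} (S₁ S₂ : Fin n → Fin n → Fin n) : Prop :=
  Function.Injective (fun p : Fin n × Fin n => (S₁ p.1 p.2, S₂ p.1 p.2))


lemma two_agree {n : ℕ} {B : Finset (Fin n → ZMod n)} (hB : PlaneCode B)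
    {b b' : Fin n → ZMod n} (hb : b ∈ B) (hb' : b' ∈ B)
    {i j : Fin n} (hij : i ≠ j) (h1 : b i = b' i) (h2 : b j = b' j) : b = b' := by
  by_contra hne
  have h := hB b hb b' hb' hne
  have hsub : ({i, j} : Finset (Fin n)) ⊆ Finset.univ.filter fun t => b t - b' t = 0 := by
    intro t ht
    rcases Finset.mem_insert.1 ht with rfl | ht
    · simp [sub_eq_zero, h1]
    · simp only [Finset.mem_singleton] at ht
      subst ht
      simp [sub_eq_zero, h2]
  have h2c : 2 ≤ agreeCount b b' := by
    have := Finset.card_le_card hsub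
    rwa [Finset.card_pair hij] at this
  omega

lemma proj_surj {n : ℕ} (hn : 2 ≤ n) {B : Finset (Fin n → ZMod n)}
    (hcard : B.card = n ^ 2) (hB : PlaneCode B) {i j : Fin n} (hij : i ≠ j)
    (x y : ZMod n) : ∃ b ∈ B, b i = x ∧ b j = y := by
  haveI : NeZero n := ⟨by omega⟩
  classical
  set f : ↥B → ZMod n × ZMod n := fun b => (b.1 i, b.1 j) with hf
  have hinj : Function.Injective f := by
    rintro ⟨a, ha⟩ ⟨c, hc⟩ h
    simp only [hf, Prod.mk.injEq] at h
    exact Subtype.ext (two_agree hB ha hc hij h.1 h.2)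
  have hcards : Fintype.card ↥B = Fintype.card (ZMod n × ZMod n) := by
    simp [Fintype.card_coe, hcard, ZMod.card, sq]
  have hsurj := ((Fintype.bijective_iff_injective_and_card f).2 ⟨hinj, hcards⟩).2
  obtain ⟨⟨b, hbB⟩, hb⟩ := hsurj (x, y)
  exact ⟨b, hbB, congrArg Prod.fst hb, congrArg Prod.snd hb⟩

lemma line_card {n : ℕ} (hn : 2 ≤ n) {B : Finset (Fin n → ZMod n)}
    (hcard : B.card = n ^ 2) (hB : PlaneCode B) {b : Fin n → ZMod n}
    (hb : b ∈ B) (i : Fin n) :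
    (B.filter fun c => c i = b i).card = n := by
  haveI : NeZero n := ⟨by omega⟩
  classical
  obtain ⟨j, hj⟩ := Fintype.exists_ne_of_one_lt_card (by rw [Fintype.card_fin]; exact hn) i
  have hij : i ≠ j := hj.symm
  have := Finset.card_bij (fun (c : Fin n → ZMod n) (_ : c ∈ B.filter fun c => c i = b i) => c j)
    (fun c hc => Finset.mem_univ _)
    (by
      intro c hc c' hc' h
      simp only [Finset.mem_filter] at hc hc'
      exact two_agree hB hc.1 hc'.1 hij (hc.2.trans hc'.2.symm) h)
    (by
      intro y _
      obtain ⟨c, hcB, hci, hcj⟩ := proj_surj hn hcard hB hij (b i) y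
      exact ⟨c, Finset.mem_filter.2 ⟨hcB, hci⟩, hcj⟩)
  rw [this]
  simp [ZMod.card]

lemma disjoint_card {n : ℕ} (hn : 2 ≤ n) {B : Finset (Fin n → ZMod n)}
    (hcard : B.card = n ^ 2) (hB : PlaneCode B) {b : Fin n → ZMod n}
    (hb : b ∈ B) :
    n - 1 ≤ (B.filter fun c => ∀ i, c i ≠ b i).card := by
  classical
  set N := B.filter fun c => ∀ i, c i ≠ b i with hN
  set A : Fin n → Finset (Fin n → ZMod n) :=
    fun i => B.filter fun c => c ≠ b ∧ c i = b i with hA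
  have hcover : B ⊆ N ∪ insert b (Finset.univ.biUnion A) := by
    intro c hc
    by_cases h1 : c = b
    · subst h1
      exact Finset.mem_union_right _ (Finset.mem_insert_self _ _)
    by_cases h2 : ∀ i, c i ≠ b i
    · exact Finset.mem_union_left _ (Finset.mem_filter.2 ⟨hc, h2⟩)
    · push_neg at h2
      obtain ⟨i, hi⟩ := h2
      refine Finset.mem_union_right _ (Finset.mem_insert_of_mem ?_)
      exact Finset.mem_biUnion.2 ⟨i, Finset.mem_univ _, Finset.mem_filter.2 ⟨hc, h1, hi⟩⟩
  have hAi : ∀ i, (A i).card ≤ n - 1 := by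
    intro i
    have hsub : A i ⊆ (B.filter fun c => c i = b i).erase b := by
      intro c hc
      simp only [hA, Finset.mem_filter] at hc
      exact Finset.mem_erase.2 ⟨hc.2.1, Finset.mem_filter.2 ⟨hc.1, hc.2.2⟩⟩
    have hmem : b ∈ B.filter fun c => c i = b i := Finset.mem_filter.2 ⟨hb, rfl⟩
    have := Finset.card_le_card hsub
    rw [Finset.card_erase_of_mem hmem, line_card hn hcard hB hb i] at this
    exact this
  have hbi : (Finset.univ.biUnion A).card ≤ n * (n - 1) := by
    calc (Finset.univ.biUnion A).card ≤ ∑ i, (A i).card := Finset.card_biUnion_le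
    _ ≤ ∑ _i : Fin n, (n - 1) := Finset.sum_le_sum fun i _ => hAi i
    _ = n * (n - 1) := by simp [Finset.sum_const, mul_comm]
  have htot : B.card ≤ N.card + (1 + n * (n - 1)) := by
    calc B.card ≤ (N ∪ insert b (Finset.univ.biUnion A)).card := Finset.card_le_card hcover
    _ ≤ N.card + (insert b (Finset.univ.biUnion A)).card := Finset.card_union_le _ _
    _ ≤ N.card + (1 + (Finset.univ.biUnion A).card) := by
        have := Finset.card_insert_le b (Finset.univ.biUnion A)
        omega
    _ ≤ N.card + (1 + n * (n - 1)) := by omega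
  obtain ⟨m, rfl⟩ : ∃ m, n = m + 2 := ⟨n - 2, by omega⟩
  rw [hcard] at htot
  have hs : m + 2 - 1 = m + 1 := rfl
  rw [hs] at htot ⊢
  nlinarith [htot]

lemma trans_disj {n : ℕ} (hn : 2 ≤ n) {B : Finset (Fin n → ZMod n)}
    (hcard : B.card = n ^ 2) (hB : PlaneCode B) {b b' b'' : Fin n → ZMod n}
    (hb : b ∈ B) (hb' : b' ∈ B) (hb'' : b'' ∈ B)
    (h1 : ∀ i, b i ≠ b' i) (h2 : ∀ i, b'' i ≠ b' i) (hne : b ≠ b'') :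
    ∀ i, b i ≠ b'' i := by
  intro i hi
  classical
  set C := B.filter fun c => c i = b i with hC
  have hCc : C.card = n := line_card hn hcard hB hb i
  set D := C.filter fun c => ∃ j, c j = b' j with hD
  have hgs : ∀ j : Fin n, j ≠ i → ∃ c ∈ B, c i = b i ∧ c j = b' j :=
    fun j hj => proj_surj hn hcard hB (Ne.symm hj) (b i) (b' j)
  set g : Fin n → (Fin n → ZMod n) :=
    fun j => if h : j = i then b else (hgs j h).choose with hg
  have hgp : ∀ j (hj : j ≠ i), g j ∈ B ∧ g j i = b i ∧ g j j = b' j := by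
    intro j hj
    simp only [hg, dif_neg hj]
    obtain ⟨h1, h2, h3⟩ := (hgs j hj).choose_spec
    exact ⟨h1, h2, h3⟩
  have hmaps : ∀ j ∈ Finset.univ.erase i, g j ∈ D := by
    intro j hj
    have hj' : j ≠ i := (Finset.mem_erase.1 hj).1
    obtain ⟨hgB, hgi, hgj⟩ := hgp j hj'
    exact Finset.mem_filter.2 ⟨Finset.mem_filter.2 ⟨hgB, hgi⟩, j, hgj⟩
  have hinj : Set.InjOn g (Finset.univ.erase i) := by
    intro j hj j' hj' heq
    simp only [Finset.coe_erase, Set.mem_diff, Finset.mem_coe] at hj hj'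
    by_contra hjj
    have hj1 : j ≠ i := by simpa using hj.2
    have hj2 : j' ≠ i := by simpa using hj'.2
    obtain ⟨hgB, hgi, hgj⟩ := hgp j hj1
    obtain ⟨hgB', hgi', hgj'⟩ := hgp j' hj2
    have hne' : g j ≠ b' := fun h => h1 i (by rw [← hgi, h])
    exact hne' (two_agree hB hgB hb' hjj hgj (heq ▸ hgj'))
  have hDcard : n - 1 ≤ D.card := by
    have := Finset.card_le_card_of_injOn g hmaps hinj
    rwa [Finset.card_erase_of_mem (Finset.mem_univ _), Finset.card_univ,
      Fintype.card_fin] at this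
  have hpair : ({b, b''} : Finset (Fin n → ZMod n)) ⊆ C \ D := by
    intro c hc
    rcases Finset.mem_insert.1 hc with rfl | hc
    · refine Finset.mem_sdiff.2 ⟨Finset.mem_filter.2 ⟨hb, rfl⟩, ?_⟩
      simp only [hD, Finset.mem_filter, not_and, not_exists]
      exact fun _ j => h1 j
    · simp only [Finset.mem_singleton] at hc
      subst hc
      refine Finset.mem_sdiff.2 ⟨Finset.mem_filter.2 ⟨hb'', hi.symm⟩, ?_⟩
      simp only [hD, Finset.mem_filter, not_and, not_exists]
      exact fun _ j => h2 j
  have h2le : 2 ≤ (C \ D).card := by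
    have := Finset.card_le_card hpair
    rwa [Finset.card_pair hne] at this
  have hsplit : (C \ D).card + D.card = C.card :=
    Finset.card_sdiff_add_card_eq_card (Finset.filter_subset _ _)
  omega
lemma rep_exists {n : ℕ} (hn : 2 ≤ n) {B : Finset (Fin n → ZMod n)}
    (hcard : B.card = n ^ 2) (hB : PlaneCode B) {b : Fin n → ZMod n}
    (hb : b ∈ B) :
    ∃ r ∈ B, r ⟨0, by omega⟩ = 0 ∧ (r = b ∨ ∀ i, r i ≠ b i) := by
  haveI : NeZero n := ⟨by omega⟩
  classical
  set i0 : Fin n := ⟨0, by omega⟩ with hi0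
  set K := insert b (B.filter fun c => ∀ i, c i ≠ b i) with hK
  have hKB : K ⊆ B := Finset.insert_subset hb (Finset.filter_subset _ _)
  have hbnot : b ∉ B.filter fun c => ∀ i, c i ≠ b i := by
    simp only [Finset.mem_filter, not_and, not_forall]
    exact fun _ => ⟨i0, by simp⟩
  have hKcard : n ≤ K.card := by
    have h1 := disjoint_card hn hcard hB hb
    have h2 : K.card = (B.filter fun c => ∀ i, c i ≠ b i).card + 1 :=
      Finset.card_insert_of_notMem hbnot
    generalize hq : K.card = q at h2 ⊢
    generalize hp : (B.filter fun c => ∀ i, c i ≠ b i).card = p at h1 h2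
    clear hB hbnot hKB hi0 hK hcard hb hq hp
    omega
  have hprop : ∀ c ∈ K, c = b ∨ ∀ i, c i ≠ b i := by
    intro c hc
    rcases Finset.mem_insert.1 hc with rfl | hc
    · exact Or.inl rfl
    · exact Or.inr (Finset.mem_filter.1 hc).2
  have hinj : Set.InjOn (fun c : Fin n → ZMod n => c i0) K := by
    intro c hc c' hc' hcc
    by_contra hne
    rcases hprop c hc with rfl | h1
    · rcases hprop c' hc' with rfl | h2
      · exact hne rfl
      · exact h2 i0 hcc.symm
    · rcases hprop c' hc' with rfl | h2
      · exact h1 i0 hcc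
      · exact trans_disj hn hcard hB (hKB hc) hb (hKB hc')
          h1 h2 hne i0 hcc
  have himg : K.image (fun c : Fin n → ZMod n => c i0) = Finset.univ := by
    apply Finset.eq_univ_of_card
    rw [Finset.card_image_of_injOn hinj, ZMod.card]
    have hle : K.card ≤ n := by
      have := Finset.card_le_card_of_injOn (fun c : Fin n → ZMod n => c i0)
        (fun c _ => Finset.mem_univ _) hinj
      simpa [ZMod.card] using this
    omega
  have h0 : (0 : ZMod n) ∈ K.image (fun c : Fin n → ZMod n => c i0) := by
    rw [himg]; exact Finset.mem_univ _
  obtain ⟨r, hrK, hr0⟩ := Finset.mem_image.1 h0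
  exact ⟨r, hKB hrK, hr0, hprop r hrK⟩

theorem mols_of_plane_code (n : ℕ) (hn : 2 ≤ n)
    (B : Finset (Fin n → ZMod n)) (hcard : B.card = n ^ 2) (hB : PlaneCode B) :
    ∃ S : Fin (n - 1) → Fin n → Fin n → Fin n,
      (∀ k, IsLatinSquare (S k)) ∧
      (∀ k l, k ≠ l → IsOrthogonal (S k) (S l)) := by
  haveI : NeZero n := ⟨by omega⟩
  classical
  have h0n : 0 < n := by omega
  have h1n : 1 < n := hn
  set i0 : Fin n := ⟨0, h0n⟩ with hi0def
  set i1 : Fin n := ⟨1, h1n⟩ with hi1def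
  have h01 : i0 ≠ i1 := by
    simp [hi0def, hi1def, Fin.ext_iff]
  obtain ⟨σ⟩ : Nonempty (ZMod n ≃ Fin n) := ⟨Fintype.equivFinOfCardEq (ZMod.card n)⟩
  choose w hwB hw0 hw1 using fun x y : ZMod n => proj_surj hn hcard hB h01 x y
  choose rep hrB hr0' hrprop using fun c (hc : c ∈ B) => rep_exists hn hcard hB hc
  have hr0 : ∀ c (hc : c ∈ B), rep c hc i0 = 0 := fun c hc => hr0' c hc
  have hRel : ∀ c (hc : c ∈ B) c' (hc' : c' ∈ B),
      rep c hc i1 = rep c' hc' i1 → c = c' ∨ ∀ i, c i ≠ c' i := by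
    intro c hc c' hc' h
    have hre : rep c hc = rep c' hc' :=
      two_agree hB (hrB c hc) (hrB c' hc') h01 (by rw [hr0, hr0]) h
    rcases hrprop c hc with h1 | h1
    · rcases hrprop c' hc' with h2 | h2
      · exact Or.inl (by rw [← h1, hre, h2])
      · right; intro i hic
        apply h2 i
        rw [← hre, h1, hic]
    · rcases hrprop c' hc' with h2 | h2
      · right; intro i hic
        apply h1 i
        rw [hre, h2, hic]
      · by_cases hcc : c = c'
        · exact Or.inl hcc
        · right
          refine trans_disj hn hcard hB hc (hrB c hc) hc'
            (fun i hh => h1 i hh.symm) (fun i hh => ?_) hcc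
          exact h2 i (by rw [← hre, ← hh])
  have hkey : ∀ c (hc : c ∈ B) c' (hc' : c' ∈ B) (m : Fin n),
      c m = c' m → rep c hc i1 = rep c' hc' i1 → c = c' := by
    intro c hc c' hc' m hm hl
    rcases hRel c hc c' hc' hl with h | h
    · exact h
    · exact absurd hm (h m)
  have hval1 : ∀ (k : Fin (n-1)) c (hc : c ∈ B) c' (hc' : c' ∈ B) (m : Fin n),
      (m : ℕ) < 2 → c m = c' m →
      (if h : (k : ℕ) + 2 < n then c ⟨(k : ℕ) + 2, h⟩ else rep c hc i1) =
        (if h : (k : ℕ) + 2 < n then c' ⟨(k : ℕ) + 2, h⟩ else rep c' hc' i1) →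
      c = c' := by
    intro k c hc c' hc' m hm hcm hv
    split_ifs at hv with h
    · refine two_agree hB hc hc' (i := m) (j := ⟨(k : ℕ) + 2, h⟩) ?_ hcm hv
      simp only [ne_eq, Fin.ext_iff]
      omega
    · exact hkey c hc c' hc' m hcm hv
  have hval2 : ∀ (k l : Fin (n-1)), k ≠ l → ∀ c (hc : c ∈ B) c' (hc' : c' ∈ B),
      (if h : (k : ℕ) + 2 < n then c ⟨(k : ℕ) + 2, h⟩ else rep c hc i1) =
        (if h : (k : ℕ) + 2 < n then c' ⟨(k : ℕ) + 2, h⟩ else rep c' hc' i1) →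
      (if h : (l : ℕ) + 2 < n then c ⟨(l : ℕ) + 2, h⟩ else rep c hc i1) =
        (if h : (l : ℕ) + 2 < n then c' ⟨(l : ℕ) + 2, h⟩ else rep c' hc' i1) →
      c = c' := by
    intro k l hkl c hc c' hc' hv hw2
    split_ifs at hv hw2 with h h'
    · have hne : (⟨(k : ℕ) + 2, h⟩ : Fin n) ≠ ⟨(l : ℕ) + 2, h'⟩ := by
        simp only [ne_eq, Fin.mk.injEq]
        intro hh
        exact hkl (Fin.ext (by omega))
      exact two_agree hB hc hc' hne hv hw2
    · exact hkey c hc c' hc' _ hv hw2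
    · exact hkey c hc c' hc' _ hw2 hv
    · exfalso
      have hk := k.isLt
      have hl := l.isLt
      exact hkl (Fin.ext (by omega))
  refine ⟨fun k i j =>
      σ (if h : (k : ℕ) + 2 < n then w (σ.symm i) (σ.symm j) ⟨(k : ℕ) + 2, h⟩
        else rep (w (σ.symm i) (σ.symm j)) (hwB _ _) i1), ?_, ?_⟩
  · intro k
    constructor
    · intro i
      apply Finite.injective_iff_bijective.mp
      intro j j' hEq
      simp only at hEq
      have hv := σ.injective hEq
      have heq := hval1 k _ (hwB _ _) _ (hwB _ _) i0
        (by show (0:ℕ) < 2; norm_num) (by rw [hw0, hw0]) hv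
      have h1 := congrArg (fun c => c i1) heq
      rw [hw1, hw1] at h1
      exact σ.symm.injective h1
    · intro j
      apply Finite.injective_iff_bijective.mp
      intro i i' hEq
      simp only at hEq
      have hv := σ.injective hEq
      have heq := hval1 k _ (hwB _ _) _ (hwB _ _) i1
        (by show (1:ℕ) < 2; norm_num) (by rw [hw1, hw1]) hv
      have h1 := congrArg (fun c => c i0) heq
      rw [hw0, hw0] at h1
      exact σ.symm.injective h1
  · intro k l hkl
    intro p p' hEq
    simp only [Prod.mk.injEq] at hEq
    obtain ⟨h1, h2⟩ := hEq
    have hv1 := σ.injective h1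
    have hv2 := σ.injective h2
    have heq := hval2 k l hkl _ (hwB _ _) _ (hwB _ _) hv1 hv2
    have e0 := congrArg (fun c => c i0) heq
    have e1 := congrArg (fun c => c i1) heq
    rw [hw0, hw0] at e0
    rw [hw1, hw1] at e1
    exact Prod.ext (σ.symm.injective e0) (σ.symm.injective e1)
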